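/- Let G be a finite simple graph with vertex set V, let v₁, …, v_t be distinct vertices of G (the terminals), and let k be a natural number. Let G' be the graph obtained from G by adding t new vertices v₁', …, v_t' and the following new edges: v_i v_i' for every 1 ≤ i ≤ t, and v_i' v_j' for all 1 ≤ i < j ≤ t; let S = {v_i v_i' : 1 ≤ i ≤ t}. Then the following are equivalent: (a) there exists T ⊆ V with |T| ≤ k such that no connected component of the subgraph of G induced on V ∖ T contains two distinct terminals; (b) there exists T' ⊆ V(G') with |T'| ≤ k such that the subgraph of G' induced on V(G') ∖ T' contains no simple cycle containing an edge of S. -/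

import Mathlib

open SimpleGraph

/-- Extraction lemma: a walk in `G'` starting at `Sum.inl u` and ending at an `inr`
vertex decomposes as a lifted `G`-walk to some `v a` followed by the edge into `inr a`
and a remaining walk. -/
private lemma extract_aux {V : Type} {t : ℕ} {G : SimpleGraph V} {v : Fin t → V}
    {G' : SimpleGraph (V ⊕ Fin t)}
    (hAdj₁ : ∀ u w : V, G'.Adj (Sum.inl u) (Sum.inl w) ↔ G.Adj u w)
    (hAdj₂ : ∀ (u : V) (i : Fin t), G'.Adj (Sum.inl u) (Sum.inr i) ↔ u = v i)
    {T : Set V} {x z : V ⊕ Fin t} (hz : ∀ u0 : V, z ≠ Sum.inl u0)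
    (w : G'.Walk x z) :
    ∀ (u : V), x = Sum.inl u →
    (∀ y ∈ w.support, y ∉ Sum.inl '' T) →
    ∃ (a : Fin t) (p : G.Walk u (v a)) (w₂ : G'.Walk (Sum.inr a) z),
      (∀ y ∈ p.support, y ∉ T) ∧ w.support = p.support.map Sum.inl ++ w₂.support := by
  induction w with
  | nil =>
    intro u hu _
    exact absurd hu (hz u)
  | cons h q ih =>
    rename_i s y _
    intro u hu hav
    subst hu
    cases y with
    | inl u' =>
      obtain ⟨a, p, w₂, hp, hsupp⟩ := ih hz u' rfl (fun y hy => hav y (by rw [Walk.support_cons]; exact List.mem_cons_of_mem _ hy))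
      refine ⟨a, Walk.cons ((hAdj₁ u u').mp h) p, w₂, ?_, ?_⟩
      · intro y hy
        rcases List.mem_cons.mp (by simpa using hy) with h1 | h1
        · subst h1; exact fun hT => hav (Sum.inl y) (by simp) ⟨y, hT, rfl⟩
        · exact hp y h1
      · simp [hsupp]
    | inr a =>
      have hva : u = v a := (hAdj₂ u a).mp h
      refine ⟨a, (Walk.nil : G.Walk u u).copy rfl hva, q, ?_, ?_⟩
      · intro y hy
        simp only [Walk.support_copy, Walk.support_nil, List.mem_singleton] at hy
        subst hy
        exact fun hT => hav (Sum.inl y) (by simp) ⟨y, hT, rfl⟩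
      · simp [Walk.support_copy]

/-- If a nodup walk between two `inr` vertices avoids `Sum.inl '' T` and contains an
`inl` vertex, then `T` fails to be a multiway cut. -/
private lemma extract_aux2 {V : Type} {t : ℕ} {G : SimpleGraph V} {v : Fin t → V}
    {G' : SimpleGraph (V ⊕ Fin t)}
    (hAdj₁ : ∀ u w : V, G'.Adj (Sum.inl u) (Sum.inl w) ↔ G.Adj u w)
    (hAdj₂ : ∀ (u : V) (i : Fin t), G'.Adj (Sum.inl u) (Sum.inr i) ↔ u = v i)
    {T : Set V}
    (hcut : ∀ i j : Fin t, i ≠ j →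
      ¬ ∃ p : G.Walk (v i) (v j), ∀ x ∈ p.support, x ∉ T)
    {x z : V ⊕ Fin t} (hz : ∀ u0 : V, z ≠ Sum.inl u0)
    (w : G'.Walk x z) :
    ∀ (j : Fin t), x = Sum.inr j →
    (∀ y ∈ w.support, y ∉ Sum.inl '' T) → w.support.Nodup →
    (∃ u0 : V, Sum.inl u0 ∈ w.support) → False := by
  induction w with
  | nil =>
    intro j hj _ _ hinl
    obtain ⟨u0, hu0⟩ := hinl
    simp only [Walk.support_nil, List.mem_singleton] at hu0
    exact hz u0 (by rw [← hu0])
  | cons h q ih =>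
    rename_i s y _
    intro j hj hav hnd hinl
    subst hj
    cases y with
    | inl u' =>
      have hva : u' = v j := (hAdj₂ u' j).mp h.symm
      subst hva
      obtain ⟨a, p, w₂, hp, hsupp⟩ :=
        extract_aux hAdj₁ hAdj₂ hz q (v j) rfl (fun y hy => hav y (by rw [Walk.support_cons]; exact List.mem_cons_of_mem _ hy))
      by_cases haj : a = j
      · subst haj
        have h1 : Sum.inr a ∈ q.support := by
          rw [hsupp]
          exact List.mem_append_right _ w₂.start_mem_support
        simp only [Walk.support_cons, List.nodup_cons] at hnd
        exact hnd.1 h1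
      · exact hcut j a (fun hh => haj hh.symm) ⟨p, hp⟩
    | inr j' =>
      refine ih hz j' rfl (fun y hy => hav y (by rw [Walk.support_cons]; exact List.mem_cons_of_mem _ hy)) ?_ ?_
      · simpa using hnd.of_cons
      · obtain ⟨u0, hu0⟩ := hinl
        simp only [Walk.support_cons, List.mem_cons] at hu0
        exact ⟨u0, hu0.resolve_left (by simp)⟩

theorem multiwayCut_iff_edgeSubsetFVS {V : Type} [Fintype V]
    (G : SimpleGraph V) (t k : ℕ) (v : Fin t → V) (hv : Function.Injective v)
    (G' : SimpleGraph (V ⊕ Fin t))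
    (hAdj₁ : ∀ u w : V, G'.Adj (Sum.inl u) (Sum.inl w) ↔ G.Adj u w)
    (hAdj₂ : ∀ (u : V) (i : Fin t), G'.Adj (Sum.inl u) (Sum.inr i) ↔ u = v i)
    (hAdj₃ : ∀ i j : Fin t, G'.Adj (Sum.inr i) (Sum.inr j) ↔ i ≠ j)
    (S : Set (Sym2 (V ⊕ Fin t)))
    (hS : S = {e | ∃ i : Fin t, e = s(Sum.inl (v i), Sum.inr i)}) :
    (∃ T : Set V, T.ncard ≤ k ∧
        ∀ i j : Fin t, i ≠ j →
          ¬ ∃ p : G.Walk (v i) (v j), ∀ x ∈ p.support, x ∉ T) ↔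
    (∃ T' : Set (V ⊕ Fin t), T'.ncard ≤ k ∧
        ∀ (w : V ⊕ Fin t) (c : G'.Walk w w), c.IsCycle →
          (∀ x ∈ c.support, x ∉ T') → ∀ e ∈ c.edges, e ∉ S) := by
  classical
  constructor
  · -- (a) → (b)
    rintro ⟨T, hTk, hcut⟩
    refine ⟨Sum.inl '' T, by rwa [Set.ncard_image_of_injective T Sum.inl_injective], ?_⟩
    intro w c hc hav e he heS
    rw [hS] at heS
    obtain ⟨i, rfl⟩ := heS
    have hmem : Sum.inr i ∈ c.support := Walk.snd_mem_support_of_mem_edges c he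
    have hc' : (c.rotate _ hmem).IsCycle := hc.rotate hmem
    have he' : s(Sum.inl (v i), Sum.inr i) ∈ (c.rotate _ hmem).edges :=
      ((Walk.rotate_edges c _ hmem).mem_iff).mpr he
    have hav' : ∀ x ∈ (c.rotate _ hmem).support, x ∉ Sum.inl '' T := by
      intro x hx
      rw [Walk.support_eq_cons] at hx
      rcases List.mem_cons.mp hx with h1 | h1
      · subst h1; exact hav _ hmem
      · exact hav x (List.mem_of_mem_tail
          (((Walk.support_rotate c _ hmem).mem_iff).mp h1))
    obtain ⟨y, h1, q, hq⟩ := Walk.not_nil_iff.mp hc'.not_nil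
    rw [hq] at hc' he' hav'
    have hnd : q.support.Nodup := by
      have := hc'.support_nodup
      simpa using this
    have havq : ∀ y ∈ q.support, y ∉ Sum.inl '' T :=
      fun y hy => hav' y (by simp [hy])
    cases y with
    | inl u =>
      have hvi : u = v i := (hAdj₂ u i).mp h1.symm
      subst hvi
      obtain ⟨a, p, w₂, hp, hsupp⟩ :=
        extract_aux hAdj₁ hAdj₂ (fun u0 => by simp) q (v i) rfl havq
      by_cases hai : a = i
      · subst hai
        rw [hsupp] at hnd
        have hw2 : w₂ = Walk.nil := by
          have hnd2 : w₂.support.Nodup := hnd.of_append_right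
          have := SimpleGraph.Path.loop_eq ⟨w₂, Walk.IsPath.mk' hnd2⟩
          exact congrArg Subtype.val this
        have hpnil : p = Walk.nil := by
          have hnd1 : p.support.Nodup :=
            (List.Nodup.of_append_left hnd).of_map
          have := SimpleGraph.Path.loop_eq ⟨p, Walk.IsPath.mk' hnd1⟩
          exact congrArg Subtype.val this
        subst hw2; subst hpnil
        have h3 := hc'.three_le_length
        have hlen : q.support.length = 2 := by rw [hsupp]; simp
        have : q.length = 1 := by
          have := q.length_support; omega
        simp [Walk.length_cons, this] at h3
      · exact hcut i a (fun hh => hai hh.symm) ⟨p, hp⟩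
    | inr j =>
      have he'' : s(Sum.inl (v i), Sum.inr i) ∈ q.edges := by
        rw [Walk.edges_cons] at he'
        rcases List.mem_cons.mp he' with h2 | h2
        · rw [Sym2.eq_iff] at h2
          rcases h2 with ⟨h3, _⟩ | ⟨h3, _⟩ <;> exact absurd h3 (by simp)
        · exact h2
      exact extract_aux2 hAdj₁ hAdj₂ hcut (fun u0 => by simp) q j rfl havq hnd
        ⟨v i, Walk.fst_mem_support_of_mem_edges q he''⟩
  · -- (b) → (a)
    rintro ⟨T', hTk, hcyc⟩
    refine ⟨Sum.elim id v '' T', le_trans (Set.ncard_image_le T'.toFinite) hTk, ?_⟩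
    rintro i j hij ⟨p, hp⟩
    have hvi : v i ∉ Sum.elim id v '' T' := hp (v i) p.start_mem_support
    have hvj : v j ∉ Sum.elim id v '' T' := hp (v j) p.end_mem_support
    set p0 : G.Walk (v j) (v i) := p.reverse.bypass with hp0
    have hp0path : p0.IsPath := Walk.bypass_isPath _
    have hp0sub : ∀ x ∈ p0.support, x ∈ p.support := by
      intro x hx
      have := Walk.support_bypass_subset _ hx
      rwa [Walk.support_reverse, List.mem_reverse] at this
    let φ : G →g G' := ⟨Sum.inl, fun h => (hAdj₁ _ _).mpr h⟩
    set L : G'.Walk (Sum.inl (v j)) (Sum.inl (v i)) := p0.map φ with hL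
    have hj' : G'.Adj (Sum.inr j) (Sum.inl (v j)) := ((hAdj₂ (v j) j).mpr rfl).symm
    have hi' : G'.Adj (Sum.inl (v i)) (Sum.inr i) := (hAdj₂ (v i) i).mpr rfl
    have hii' : G'.Adj (Sum.inr i) (Sum.inr j) := (hAdj₃ i j).mpr hij
    set P : G'.Walk (Sum.inr j) (Sum.inr i) := Walk.cons hj' (L.concat hi') with hP
    have hLsup : L.support = p0.support.map Sum.inl := Walk.support_map _ _
    have hPsup : P.support = Sum.inr j :: (p0.support.map Sum.inl ++ [Sum.inr i]) := by
      simp [hP, hLsup]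
    have hPpath : P.IsPath := by
      rw [Walk.isPath_def, hPsup]
      refine List.nodup_cons.mpr ⟨?_, ?_⟩
      · simp only [List.mem_append, List.mem_map, List.mem_singleton]
        rintro (⟨a, _, ha⟩ | hr)
        · exact absurd ha (by simp)
        · exact hij (Sum.inr.inj hr).symm
      · rw [List.nodup_append]
        refine ⟨hp0path.support_nodup.map Sum.inl_injective, List.nodup_singleton _, ?_⟩
        intro a ha
        simp only [List.mem_map] at ha
        obtain ⟨b, _, rfl⟩ := ha
        simp
    have hPedge : s(Sum.inr i, Sum.inr j) ∉ P.edges := by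
      intro hmem
      simp only [hP, Walk.edges_cons, Walk.edges_concat, List.mem_cons,
        List.concat_eq_append, List.mem_append, List.mem_singleton] at hmem
      rcases hmem with h1 | h1 | h1
      · simp [Sym2.eq_iff] at h1
      · rw [hL, Walk.edges_map] at h1
        obtain ⟨e', _, heq⟩ := List.mem_map.mp h1
        induction e' using Sym2.ind with
        | _ a b => simp [Sym2.eq_iff] at heq
      · simp [Sym2.eq_iff] at h1
    have hC : (Walk.cons hii' P).IsCycle :=
      (Walk.cons_isCycle_iff P hii').mpr ⟨hPpath, hPedge⟩
    have havC : ∀ x ∈ (Walk.cons hii' P).support, x ∉ T' := by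
      intro x hx hxT
      rw [Walk.support_cons, hPsup] at hx
      rcases List.mem_cons.mp hx with rfl | hx
      · exact hvi ⟨Sum.inr i, hxT, rfl⟩
      rcases List.mem_cons.mp hx with rfl | hx
      · exact hvj ⟨Sum.inr j, hxT, rfl⟩
      rcases List.mem_append.mp hx with hx | hx
      · obtain ⟨b, hb, rfl⟩ := List.mem_map.mp hx
        exact hp b (hp0sub b hb) ⟨Sum.inl b, hxT, rfl⟩
      · rw [List.mem_singleton] at hx; subst hx
        exact hvi ⟨Sum.inr i, hxT, rfl⟩
    refine hcyc (Sum.inr i) (Walk.cons hii' P) hC havC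
      s(Sum.inl (v i), Sum.inr i) ?_ (by rw [hS]; exact ⟨i, rfl⟩)
    simp [hP, Walk.edges_cons, Walk.edges_concat, List.concat_eq_append]
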